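/- Assume there exist a constant A > 0 and r ∈ ℕ such that for all n, every operator T on ℓ₂ⁿ with ‖Te_i‖ = 1 for all i and ‖T‖ ≤ 2 admits a partition {A_j}_{j=1}^r of {1,...,n} with ‖Σ_{i∈A_j} a_i Te_i‖² ≥ A Σ_{i∈A_j}|a_i|² for all scalars. Then for 0 < δ ≤ 3/4, every orthogonal projection P on ℓ₂ⁿ with ⟨Pe_i, e_i⟩ ≤ δ for all i admits a partition {A_j}_{j=1}^r of {1,...,n} with ‖Q_{A_j} P Q_{A_j}‖ ≤ 1 - A/4 for all j. -/

import Mathlib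

/- Conjecture 5.4 (a lower Riesz bound partition property for norm-one-columns
operators of norm at most 2) implies the projection form of the Paving Conjecture
(Conjecture 2.3 / Fundamental Principle I). -/

noncomputable section

/-- The diagonal projection `Q_A` on `ℓ₂ⁿ`. -/
def Qfin {n : ℕ} (A : Finset (Fin n)) :
    EuclideanSpace ℂ (Fin n) →L[ℂ] EuclideanSpace ℂ (Fin n) :=
  LinearMap.toContinuousLinearMap
    { toFun := fun f => WithLp.toLp 2 (fun i => if i ∈ A then f i else 0)
      map_add' := fun f g => by
        ext i; by_cases h : i ∈ A <;> simp [h, PiLp.add_apply]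
      map_smul' := fun c f => by
        ext i; by_cases h : i ∈ A <;> simp [h, PiLp.smul_apply] }

namespace PavingAux

open ContinuousLinearMap

variable {n : ℕ}

lemma pyth (P : EuclideanSpace ℂ (Fin n) →L[ℂ] EuclideanSpace ℂ (Fin n))
    (h1 : IsIdempotentElem P) (h2 : IsSelfAdjoint P) (x : EuclideanSpace ℂ (Fin n)) :
    ‖x‖^2 = ‖P x‖^2 + ‖x - P x‖^2 := by
  have horth : (inner ℂ (P x) (x - P x) : ℂ) = 0 := by
    nth_rewrite 1 [← h2.adjoint_eq]
    rw [ContinuousLinearMap.adjoint_inner_left, map_sub]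
    have : P (P x) = P x := congrFun (congrArg DFunLike.coe h1.eq) x
    rw [this, sub_self, inner_zero_right]
  have h3 := norm_add_sq_eq_norm_sq_add_norm_sq_of_inner_eq_zero (P x) (x - P x) horth
  rw [add_sub_cancel] at h3
  rw [pow_two, pow_two, pow_two, h3]

/-- Diagonal operator on `ℓ₂ⁿ`. -/
def Dop (c : Fin n → ℂ) : EuclideanSpace ℂ (Fin n) →L[ℂ] EuclideanSpace ℂ (Fin n) :=
  LinearMap.toContinuousLinearMap
    { toFun := fun f => WithLp.toLp 2 (fun i => c i * f i)
      map_add' := fun f g => by ext i; simp [PiLp.add_apply]; ring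
      map_smul' := fun a f => by ext i; simp [PiLp.smul_apply]; ring }

lemma Dop_apply (c : Fin n → ℂ) (x : EuclideanSpace ℂ (Fin n)) (i : Fin n) :
    Dop c x i = c i * x i := rfl

lemma Dop_single (c : Fin n → ℂ) (i : Fin n) :
    Dop c (EuclideanSpace.single i 1) = c i • EuclideanSpace.single i (1:ℂ) := by
  ext k
  rw [Dop_apply, PiLp.smul_apply]
  simp [EuclideanSpace.single_apply]
  split <;> simp_all

lemma Dop_norm (c : Fin n → ℂ) (M : ℝ) (hM : 0 ≤ M) (hc : ∀ i, ‖c i‖ ≤ M)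
    (x : EuclideanSpace ℂ (Fin n)) : ‖Dop c x‖ ≤ M * ‖x‖ := by
  rw [EuclideanSpace.norm_eq, EuclideanSpace.norm_eq]
  rw [show M * Real.sqrt (∑ i, ‖x i‖^2) = Real.sqrt (M^2 * ∑ i, ‖x i‖^2) by
    rw [Real.sqrt_mul (sq_nonneg M), Real.sqrt_sq hM]]
  apply Real.sqrt_le_sqrt
  rw [Finset.mul_sum]
  apply Finset.sum_le_sum
  intro i _
  rw [Dop_apply, norm_mul, mul_pow]
  apply mul_le_mul_of_nonneg_right _ (sq_nonneg _)
  exact pow_le_pow_left₀ (norm_nonneg _) (hc i) 2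

lemma Qfin_apply (A : Finset (Fin n)) (x : EuclideanSpace ℂ (Fin n)) (i : Fin n) :
    Qfin A x i = if i ∈ A then x i else 0 := rfl

lemma Qfin_norm_le (A : Finset (Fin n)) (x : EuclideanSpace ℂ (Fin n)) :
    ‖Qfin A x‖ ≤ ‖x‖ := by
  rw [EuclideanSpace.norm_eq, EuclideanSpace.norm_eq]
  apply Real.sqrt_le_sqrt
  apply Finset.sum_le_sum
  intro i _
  rw [Qfin_apply]
  split <;> simp [sq_nonneg]

lemma Qfin_sa (A : Finset (Fin n)) : IsSelfAdjoint (Qfin A) := by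
  rw [ContinuousLinearMap.isSelfAdjoint_iff_isSymmetric]
  intro x y
  rw [PiLp.inner_apply, PiLp.inner_apply]
  apply Finset.sum_congr rfl
  intro i _
  by_cases hi : i ∈ A <;> simp [Qfin_apply, hi]

lemma Qfin_norm_sq (A : Finset (Fin n)) (x : EuclideanSpace ℂ (Fin n)) :
    ‖Qfin A x‖^2 = ∑ i ∈ A, ‖x i‖^2 := by
  rw [EuclideanSpace.norm_eq,
    Real.sq_sqrt (Finset.sum_nonneg fun i _ => sq_nonneg _),
    ← Finset.sum_subset (Finset.subset_univ A) (fun i _ hi => by simp [Qfin_apply, hi])]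
  exact Finset.sum_congr rfl fun i hi => by simp [Qfin_apply, hi]

lemma sum_single_eq_Q (A : Finset (Fin n)) (x : EuclideanSpace ℂ (Fin n)) :
    ∑ i ∈ A, x i • (EuclideanSpace.single i (1:ℂ)) = Qfin A x := by
  ext k
  rw [Qfin_apply]
  have h1 : (∑ i ∈ A, x i • EuclideanSpace.single i (1:ℂ)) k
      = ∑ i ∈ A, (x i • EuclideanSpace.single i (1:ℂ)) k := by rw [WithLp.ofLp_sum, Finset.sum_apply]
  rw [h1]
  simp [EuclideanSpace.single_apply, PiLp.smul_apply, mul_ite,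
    Finset.sum_ite_eq' A k (fun i => x i)]

end PavingAux

open ContinuousLinearMap PavingAux in
theorem lower_riesz_partition_implies_projection_paving
    (A : ℝ) (hA : 0 < A) (r : ℕ)
    (h : ∀ (n : ℕ) (T : EuclideanSpace ℂ (Fin n) →L[ℂ] EuclideanSpace ℂ (Fin n)),
      (∀ i, ‖T (EuclideanSpace.single i 1)‖ = 1) → ‖T‖ ≤ 2 →
      ∃ part : Fin r → Finset (Fin n),
        (∀ j k, j ≠ k → Disjoint (part j) (part k)) ∧
        Finset.univ.biUnion part = Finset.univ ∧
        ∀ j, ∀ a : Fin n → ℂ,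
          A * ∑ i ∈ part j, ‖a i‖ ^ 2 ≤
            ‖∑ i ∈ part j, a i • T (EuclideanSpace.single i 1)‖ ^ 2) :
    ∀ δ : ℝ, 0 < δ → δ ≤ 3 / 4 →
    ∀ (n : ℕ) (P : EuclideanSpace ℂ (Fin n) →L[ℂ] EuclideanSpace ℂ (Fin n)),
      IsIdempotentElem P → IsSelfAdjoint P →
      (∀ i, (inner ℂ (P (EuclideanSpace.single i 1)) (EuclideanSpace.single i 1) : ℂ).re ≤ δ) →
      ∃ part : Fin r → Finset (Fin n),
        (∀ j k, j ≠ k → Disjoint (part j) (part k)) ∧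
        Finset.univ.biUnion part = Finset.univ ∧
        ∀ j, ‖(Qfin (part j)).comp (P.comp (Qfin (part j)))‖ ≤ 1 - A / 4 := by
  -- First, `A ≤ 1`, by testing the hypothesis on the identity in dimension 1.
  have hA1 : A ≤ 1 := by
    obtain ⟨part, hdisj, hcover, hineq⟩ := h 1 (ContinuousLinearMap.id ℂ _)
      (fun i => by simp [EuclideanSpace.norm_single])
      (le_trans ContinuousLinearMap.norm_id_le one_le_two)
    have h0 : (0 : Fin 1) ∈ Finset.univ.biUnion part := by
      rw [hcover]; exact Finset.mem_univ _
    rw [Finset.mem_biUnion] at h0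
    obtain ⟨j, -, hj⟩ := h0
    have hpj : part j = {0} :=
      Finset.eq_singleton_iff_unique_mem.mpr ⟨hj, fun x _ => Subsingleton.elim x 0⟩
    have := hineq j (fun _ => 1)
    rw [hpj] at this
    simpa [EuclideanSpace.norm_single] using this
  intro δ hδ0 hδ n P hP1 hP2 hPd
  have hPP : ∀ z, P (P z) = P z := fun z => congrFun (congrArg DFunLike.coe hP1.eq) z
  set e : Fin n → EuclideanSpace ℂ (Fin n) := fun i => EuclideanSpace.single i 1 with he
  have hen : ∀ i, ‖e i‖ = 1 := fun i => by simp [he, EuclideanSpace.norm_single]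
  -- the diagonal of P is small, so the columns of 1 - P are long
  have hPdiag : ∀ i, ‖P (e i)‖^2 ≤ δ := by
    intro i
    have h1 : (inner ℂ (P (e i)) (P (e i)) : ℂ) = inner ℂ (e i) (P (e i)) := by
      nth_rewrite 1 [← hP2.adjoint_eq]
      rw [ContinuousLinearMap.adjoint_inner_left, hPP]
    have h2 : (inner ℂ (P (e i)) (P (e i)) : ℂ) = ((‖P (e i)‖^2 : ℝ) : ℂ) := by
      rw [inner_self_eq_norm_sq_to_K]
      norm_cast
    have h3 := h1
    rw [h2] at h3
    have h4 : (inner ℂ (e i) (P (e i)) : ℂ).re = (inner ℂ (P (e i)) (e i) : ℂ).re := by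
      rw [← inner_conj_symm (e i) (P (e i))]
      exact Complex.conj_re _
    calc ‖P (e i)‖^2 = ((‖P (e i)‖^2 : ℝ) : ℂ).re := (Complex.ofReal_re _).symm
      _ = (inner ℂ (e i) (P (e i)) : ℂ).re := by rw [h3]
      _ = (inner ℂ (P (e i)) (e i) : ℂ).re := h4
      _ ≤ δ := hPd i
  set c : Fin n → ℝ := fun i => ‖e i - P (e i)‖ with hc
  have hc_nonneg : ∀ i, 0 ≤ c i := fun i => norm_nonneg _
  have hc_sq : ∀ i, c i ^ 2 = 1 - ‖P (e i)‖^2 := by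
    intro i
    have := pyth P hP1 hP2 (e i)
    rw [hen i] at this
    simp only [hc]
    nlinarith
  have hc_ge : ∀ i, (1:ℝ)/2 ≤ c i := by
    intro i
    have h1 := hc_sq i
    have h2 := hPdiag i
    nlinarith [hc_nonneg i]
  have hc_pos : ∀ i, 0 < c i := fun i => lt_of_lt_of_le (by norm_num) (hc_ge i)
  -- the test operator `T`
  set D : EuclideanSpace ℂ (Fin n) →L[ℂ] EuclideanSpace ℂ (Fin n) :=
    Dop (fun i => ((c i : ℂ))⁻¹) with hD
  set T : EuclideanSpace ℂ (Fin n) →L[ℂ] EuclideanSpace ℂ (Fin n) := (1 - P).comp D with hT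
  have hcne : ∀ i, ((c i : ℝ) : ℂ) ≠ 0 := fun i => Complex.ofReal_ne_zero.mpr (ne_of_gt (hc_pos i))
  have hT_single : ∀ i, T (e i) = ((c i : ℂ))⁻¹ • (e i - P (e i)) := by
    intro i
    rw [hT, comp_apply, hD, he]
    rw [Dop_single, map_smul]
    simp [sub_apply, one_apply]
  have hT1 : ∀ i, ‖T (e i)‖ = 1 := by
    intro i
    rw [hT_single i, norm_smul, norm_inv, Complex.norm_real,
      Real.norm_of_nonneg (hc_nonneg i)]
    exact inv_mul_cancel₀ (ne_of_gt (hc_pos i))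
  have hcontr : ∀ y, ‖y - P y‖ ≤ ‖y‖ := by
    intro y
    have := pyth P hP1 hP2 y
    nlinarith [norm_nonneg y, norm_nonneg (y - P y), sq_nonneg ‖P y‖]
  have hT2 : ‖T‖ ≤ 2 := by
    apply opNorm_le_bound _ (by norm_num)
    intro x
    have h1 : T x = D x - P (D x) := by
      rw [hT, comp_apply]; simp [sub_apply, one_apply]
    rw [h1]
    refine le_trans (hcontr (D x)) ?_
    apply Dop_norm _ 2 (by norm_num)
    intro i
    rw [norm_inv, Complex.norm_real, Real.norm_of_nonneg (hc_nonneg i)]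
    rw [show (2:ℝ) = ((1:ℝ)/2)⁻¹ by norm_num]
    exact inv_anti₀ (by norm_num) (hc_ge i)
  obtain ⟨part, hdisj, hcover, hineq⟩ := h n T (fun i => hT1 i) hT2
  refine ⟨part, hdisj, hcover, ?_⟩
  intro j
  set Q : EuclideanSpace ℂ (Fin n) →L[ℂ] EuclideanSpace ℂ (Fin n) := Qfin (part j) with hQ
  -- key estimate
  have hkey : ∀ x, ‖P (Q x)‖^2 ≤ (1 - A/4) * ‖x‖^2 := by
    intro x
    have hsum := hineq j (fun i => (c i : ℂ) * x i)
    have hL : A/4 * ‖Q x‖^2 ≤ A * ∑ i ∈ part j, ‖(c i : ℂ) * x i‖^2 := by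
      rw [hQ, Qfin_norm_sq, Finset.mul_sum, Finset.mul_sum]
      apply Finset.sum_le_sum
      intro i _
      have h1 : ‖(c i:ℂ) * x i‖^2 = (c i)^2 * ‖x i‖^2 := by
        rw [norm_mul, mul_pow, Complex.norm_real, Real.norm_of_nonneg (hc_nonneg i)]
      rw [h1]
      have hcc : (1:ℝ)/4 ≤ c i ^ 2 := by nlinarith [hc_ge i, hc_nonneg i]
      nlinarith [mul_le_mul_of_nonneg_left hcc
        (mul_nonneg (le_of_lt hA) (sq_nonneg ‖x i‖))]
    have hR : ∑ i ∈ part j, ((c i:ℂ) * x i) • T (e i) = Q x - P (Q x) := by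
      have hterm : ∀ i ∈ part j, ((c i:ℂ) * x i) • T (e i)
          = x i • e i - x i • P (e i) := by
        intro i _
        rw [hT_single i, smul_smul, mul_comm ((c i:ℂ)) (x i), mul_assoc,
          mul_inv_cancel₀ (hcne i), mul_one, smul_sub]
      rw [Finset.sum_congr rfl hterm, Finset.sum_sub_distrib]
      have h2 : ∑ i ∈ part j, x i • e i = Q x := sum_single_eq_Q (part j) x
      have h3 : ∑ i ∈ part j, x i • P (e i) = P (Q x) := by
        rw [← h2, map_sum]
        exact Finset.sum_congr rfl fun i _ => (map_smul P _ _).symm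
      rw [h2, h3]
    rw [hR] at hsum
    have hpy := pyth P hP1 hP2 (Q x)
    have hQle : ‖Q x‖ ≤ ‖x‖ := Qfin_norm_le (part j) x
    have hQsq : ‖Q x‖^2 ≤ ‖x‖^2 := pow_le_pow_left₀ (norm_nonneg _) hQle 2
    linarith [mul_le_mul_of_nonneg_left hQsq (by linarith : (0:ℝ) ≤ 1 - A/4), hL, hsum, hpy]
  have hfrac : (0:ℝ) ≤ 1 - A/4 := by linarith
  have hPQ : ‖P.comp Q‖ ≤ Real.sqrt (1 - A/4) := by
    apply opNorm_le_bound _ (Real.sqrt_nonneg _)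
    intro x
    rw [comp_apply]
    have h1 : ‖P (Q x)‖ ≤ Real.sqrt ((1 - A/4) * ‖x‖^2) := by
      rw [show ‖P (Q x)‖ = Real.sqrt (‖P (Q x)‖^2) from (Real.sqrt_sq (norm_nonneg _)).symm]
      exact Real.sqrt_le_sqrt (hkey x)
    rw [Real.sqrt_mul hfrac, Real.sqrt_sq (norm_nonneg x)] at h1
    exact h1
  have hadj : adjoint (P.comp Q) = Q.comp P := by
    rw [adjoint_comp, hP2.adjoint_eq, (Qfin_sa (part j)).adjoint_eq]
  have hcomp : (Q.comp P).comp (P.comp Q) = Q.comp (P.comp Q) := by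
    ext x
    simp only [comp_apply, hPP]
  have hns := ContinuousLinearMap.norm_adjoint_comp_self (P.comp Q)
  rw [hadj, hcomp] at hns
  have : Q.comp (P.comp Q) = (Qfin (part j)).comp (P.comp (Qfin (part j))) := rfl
  rw [← this, hns]
  calc ‖P.comp Q‖ * ‖P.comp Q‖ ≤ Real.sqrt (1 - A/4) * Real.sqrt (1 - A/4) :=
        mul_le_mul hPQ hPQ (norm_nonneg _) (Real.sqrt_nonneg _)
    _ = 1 - A/4 := Real.mul_self_sqrt hfrac
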